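/- For any integers n ≥ g ≥ 1, one has Δ(R(g,n)/n) ≤ g/n. -/

import Mathlib

open MeasureTheory

/-- A set `C ⊆ ℝ` is symmetric if it is invariant under some reflection `x ↦ 2c − x`. -/
def IsSymmetricSet (C : Set ℝ) : Prop :=
  ∃ c : ℝ, ∀ x : ℝ, x ∈ C ↔ 2 * c - x ∈ C

/-- `symD A` is the supremum of measures of symmetric measurable subsets of `A`. -/
noncomputable def symD (A : Set ℝ) : ℝ :=
  sSup {m : ℝ | ∃ C : Set ℝ, C ⊆ A ∧ MeasurableSet C ∧ IsSymmetricSet C ∧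
    m = (volume C).toReal}

/-- `Delta ε` is the infimum of `symD A` over measurable `A ⊆ [0,1)` with `λ(A) = ε`. -/
noncomputable def Delta (ε : ℝ) : ℝ :=
  sInf {d : ℝ | ∃ A : Set ℝ, A ⊆ Set.Ico (0:ℝ) 1 ∧ MeasurableSet A ∧
    volume A = ENNReal.ofReal ε ∧ d = symD A}


/-- A finite set `S` of integers is a `B*[g]` set if every integer `m` has at most `g`
representations as an ordered sum `s₁ + s₂` with `s₁, s₂ ∈ S`. -/
def IsBstar (g : ℕ) (S : Finset ℤ) : Prop :=
  ∀ m : ℤ, ((S ×ˢ S).filter (fun p => p.1 + p.2 = m)).card ≤ g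

/-- `R g n` is the maximal size of a `B*[g]` set contained in `{1, …, n}`. -/
noncomputable def R (g n : ℕ) : ℕ :=
  sSup {k : ℕ | ∃ S : Finset ℤ, S ⊆ Finset.Icc 1 (n : ℤ) ∧ IsBstar g S ∧ S.card = k}

noncomputable def Fm (u : ℝ) (n : ℕ) (m : ℤ) : ℝ := min ((m:ℝ) - u) (u + 2 - (m:ℝ)) / n

lemma inner_sum_bound (n : ℕ) (hn : 0 < n) (u : ℝ) (T : Finset ℤ) :
    ∑ m ∈ T, ENNReal.ofReal (Fm u n m) ≤ ENNReal.ofReal (1/n) := by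
  have hnR : (0:ℝ) < n := by exact_mod_cast hn
  set k : ℤ := ⌊u⌋ with hk
  have hku : (k:ℝ) ≤ u := Int.floor_le u
  have huk : u < (k:ℝ) + 1 := Int.lt_floor_add_one u
  have h1 : ∑ m ∈ T, ENNReal.ofReal (Fm u n m)
      = ∑ m ∈ T ∩ {k+1, k+2}, ENNReal.ofReal (Fm u n m) := by
    refine (Finset.sum_subset Finset.inter_subset_left ?_).symm
    intro m hm hnot
    have hm' : m ≤ k ∨ k + 3 ≤ m := by
      simp only [Finset.mem_inter, Finset.mem_insert, Finset.mem_singleton, hm, true_and] at hnot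
      omega
    have hF : Fm u n m ≤ 0 := by
      rcases hm' with h | h
      · have : (m:ℝ) ≤ u := le_trans (by exact_mod_cast h) hku
        exact div_nonpos_of_nonpos_of_nonneg (le_trans (min_le_left _ _) (by linarith)) hnR.le
      · have : (k:ℝ) + 3 ≤ (m:ℝ) := by exact_mod_cast h
        exact div_nonpos_of_nonpos_of_nonneg (le_trans (min_le_right _ _) (by linarith)) hnR.le
    simp [ENNReal.ofReal_eq_zero.2 hF]
  rw [h1]
  refine le_trans (Finset.sum_le_sum_of_subset Finset.inter_subset_right) ?_
  rw [Finset.sum_pair (by omega : k + 1 ≠ k + 2)]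
  have ha : Fm u n (k+1) ≤ ((k:ℝ) + 1 - u)/n := by
    unfold Fm; push_cast; gcongr; exact min_le_left _ _
  have hb : Fm u n (k+2) ≤ (u - (k:ℝ))/n := by
    unfold Fm; push_cast
    have : min ((k:ℝ) + 2 - u) (u + 2 - ((k:ℝ)+2)) ≤ u - k :=
      le_trans (min_le_right _ _) (le_of_eq (by ring))
    gcongr
  have ha0 : 0 ≤ ((k:ℝ) + 1 - u)/n := div_nonneg (by linarith) hnR.le
  have hb0 : 0 ≤ (u - (k:ℝ))/n := div_nonneg (by linarith) hnR.le
  calc ENNReal.ofReal (Fm u n (k+1)) + ENNReal.ofReal (Fm u n (k+2))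
      ≤ ENNReal.ofReal (((k:ℝ) + 1 - u)/n) + ENNReal.ofReal ((u - (k:ℝ))/n) :=
        add_le_add (ENNReal.ofReal_le_ofReal ha) (ENNReal.ofReal_le_ofReal hb)
    _ = ENNReal.ofReal (1/n) := by
        rw [← ENNReal.ofReal_add ha0 hb0]
        congr 1
        field_simp
        ring

set_option maxHeartbeats 1000000 in
lemma core_bound (g n : ℕ) (hn : 0 < n) (S : Finset ℤ) (hB : IsBstar g S) (c : ℝ) :
    volume ((⋃ s ∈ S, Set.Ico (((s:ℝ)-1)/n) ((s:ℝ)/n)) ∩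
      {x : ℝ | 2*c - x ∈ ⋃ s ∈ S, Set.Ico (((s:ℝ)-1)/n) ((s:ℝ)/n)})
      ≤ ENNReal.ofReal ((g:ℝ)/n) := by
  have hnR : (0:ℝ) < n := by exact_mod_cast hn
  have hne : (n:ℝ) ≠ 0 := ne_of_gt hnR
  set u : ℝ := 2*c*n with hu
  set I : ℤ → Set ℝ := fun s => Set.Ico (((s:ℝ)-1)/n) ((s:ℝ)/n) with hI
  have hsub : ((⋃ s ∈ S, I s) ∩ {x : ℝ | 2*c - x ∈ ⋃ s ∈ S, I s}) ⊆
      ⋃ p ∈ S ×ˢ S, (I p.1 ∩ {x : ℝ | 2*c - x ∈ I p.2}) := by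
    rintro x ⟨hx1, hx2⟩
    simp only [Set.mem_iUnion, Set.mem_setOf_eq] at hx1 hx2
    obtain ⟨s, hs, hxs⟩ := hx1
    obtain ⟨t, ht, hxt⟩ := hx2
    exact Set.mem_iUnion₂.2 ⟨(s,t), Finset.mem_product.2 ⟨hs, ht⟩, hxs, hxt⟩
  have hterm : ∀ s t : ℤ, volume (I s ∩ {x : ℝ | 2*c - x ∈ I t})
      ≤ ENNReal.ofReal (Fm u n (s+t)) := by
    intro s t
    have hsub2 : I s ∩ {x : ℝ | 2*c - x ∈ I t} ⊆
        Set.Icc (max (((s:ℝ)-1)/n) (2*c - (t:ℝ)/n)) (min ((s:ℝ)/n) (2*c - ((t:ℝ)-1)/n)) := by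
      rintro x ⟨hx1, hx2⟩
      simp only [hI, Set.mem_Ico, Set.mem_setOf_eq] at hx1 hx2
      exact ⟨max_le hx1.1 (by linarith [hx2.2]), le_min hx1.2.le (by linarith [hx2.1])⟩
    refine le_trans (measure_mono hsub2) ?_
    rw [Real.volume_Icc]
    apply ENNReal.ofReal_le_ofReal
    have key1 : (((s:ℝ)+(t:ℝ)) - u)/n = (s:ℝ)/n - (2*c - (t:ℝ)/n) := by
      rw [hu]; field_simp; ring
    have key2 : (u + 2 - ((s:ℝ)+(t:ℝ)))/n = (2*c - ((t:ℝ)-1)/n) - (((s:ℝ)-1)/n) := by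
      rw [hu]; field_simp; ring
    have hmin : Fm u n (s+t) = min ((((s:ℝ)+(t:ℝ)) - u)/n) ((u + 2 - ((s:ℝ)+(t:ℝ)))/n) := by
      unfold Fm; push_cast; rw [min_div_div_right hnR.le]
    rw [hmin]
    refine le_min ?_ ?_
    · rw [key1]
      have := min_le_left ((s:ℝ)/n) (2*c - ((t:ℝ)-1)/n)
      have := le_max_right (((s:ℝ)-1)/n) (2*c - (t:ℝ)/n)
      linarith
    · rw [key2]
      have := min_le_right ((s:ℝ)/n) (2*c - ((t:ℝ)-1)/n)
      have := le_max_left (((s:ℝ)-1)/n) (2*c - (t:ℝ)/n)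
      linarith
  calc volume ((⋃ s ∈ S, I s) ∩ {x : ℝ | 2*c - x ∈ ⋃ s ∈ S, I s})
      ≤ ∑ p ∈ S ×ˢ S, volume (I p.1 ∩ {x : ℝ | 2*c - x ∈ I p.2}) :=
        le_trans (measure_mono hsub) (measure_biUnion_finset_le _ _)
    _ ≤ ∑ p ∈ S ×ˢ S, ENNReal.ofReal (Fm u n (p.1 + p.2)) :=
        Finset.sum_le_sum fun p _ => hterm p.1 p.2
    _ = ∑ m ∈ (S ×ˢ S).image (fun p => p.1 + p.2),
          ((S ×ˢ S).filter (fun p => p.1 + p.2 = m)).card • ENNReal.ofReal (Fm u n m) :=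
        Finset.sum_comp (fun m => ENNReal.ofReal (Fm u n m)) (fun p : ℤ × ℤ => p.1 + p.2)
    _ ≤ ∑ m ∈ (S ×ˢ S).image (fun p => p.1 + p.2), g • ENNReal.ofReal (Fm u n m) := by
        refine Finset.sum_le_sum fun m _ => ?_
        simp only [nsmul_eq_mul]
        exact mul_le_mul_left (by exact_mod_cast hB m) _
    _ = g • ∑ m ∈ (S ×ˢ S).image (fun p => p.1 + p.2), ENNReal.ofReal (Fm u n m) :=
        (Finset.smul_sum).symm
    _ ≤ g • ENNReal.ofReal (1/n) := by
        exact nsmul_le_nsmul_right (inner_sum_bound n hn u _) g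
    _ = ENNReal.ofReal ((g:ℝ)/n) := by
        rw [nsmul_eq_mul, ← ENNReal.ofReal_natCast g, ← ENNReal.ofReal_mul (by positivity)]
        rw [mul_one_div]

theorem delta_from_R (g n : ℕ) (hg : 1 ≤ g) (hgn : g ≤ n) :
    Delta ((R g n : ℝ) / n) ≤ (g : ℝ) / n := by
  have hn : 0 < n := lt_of_lt_of_le hg hgn
  have hnR : (0:ℝ) < n := by exact_mod_cast hn
  have hne : (n:ℝ) ≠ 0 := ne_of_gt hnR
  -- obtain an extremal B*[g] set
  obtain ⟨S, hSsub, hSB, hScard⟩ :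
      ∃ S : Finset ℤ, S ⊆ Finset.Icc 1 (n:ℤ) ∧ IsBstar g S ∧ S.card = R g n := by
    have hmem : R g n ∈ {k : ℕ | ∃ S : Finset ℤ, S ⊆ Finset.Icc 1 (n:ℤ) ∧
        IsBstar g S ∧ S.card = k} := by
      apply Nat.sSup_mem
      · exact ⟨0, ∅, by simp, fun m => by simp, rfl⟩
      · refine ⟨n, ?_⟩
        rintro k ⟨S, hS, -, rfl⟩
        have := Finset.card_le_card hS
        rwa [Int.card_Icc, show ((n:ℤ) + 1 - 1).toNat = n by omega] at this
    exact hmem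
  set A : Set ℝ := ⋃ s ∈ S, Set.Ico (((s:ℝ)-1)/n) ((s:ℝ)/n) with hA
  have hAsub : A ⊆ Set.Ico (0:ℝ) 1 := by
    intro x hx
    simp only [hA, Set.mem_iUnion, Set.mem_Ico] at hx
    obtain ⟨s, hs, hx1, hx2⟩ := hx
    obtain ⟨hs1, hs2⟩ := Finset.mem_Icc.1 (hSsub hs)
    have hs1R : (1:ℝ) ≤ (s:ℝ) := by exact_mod_cast hs1
    have hs2R : (s:ℝ) ≤ (n:ℝ) := by exact_mod_cast hs2
    constructor
    · exact le_trans (div_nonneg (by linarith) hnR.le) hx1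
    · exact lt_of_lt_of_le hx2 ((div_le_one hnR).2 hs2R)
  have hAmeas : MeasurableSet A :=
    S.measurableSet_biUnion (fun _ _ => measurableSet_Ico)
  have hAvol : volume A = ENNReal.ofReal ((R g n : ℝ) / n) := by
    have hdisj : (S : Set ℤ).PairwiseDisjoint
        (fun s : ℤ => Set.Ico (((s:ℝ)-1)/n) ((s:ℝ)/n)) := by
      intro s _ t _ hst
      have key : ∀ a b : ℤ, a < b →
          Disjoint (Set.Ico (((a:ℝ)-1)/n) ((a:ℝ)/n)) (Set.Ico (((b:ℝ)-1)/n) ((b:ℝ)/n)) := by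
        intro a b hab
        rw [Set.Ico_disjoint_Ico]
        have hab' : (a:ℝ) ≤ (b:ℝ) - 1 := by
          have : (a:ℝ) + 1 ≤ (b:ℝ) := by exact_mod_cast hab
          linarith
        calc min ((a:ℝ)/n) ((b:ℝ)/n) ≤ (a:ℝ)/n := min_le_left _ _
          _ ≤ ((b:ℝ)-1)/n := by gcongr
          _ ≤ max (((a:ℝ)-1)/n) (((b:ℝ)-1)/n) := le_max_right _ _
      rcases hst.lt_or_gt with h | h
      · exact key s t h
      · exact (key t s h).symm
    rw [hA, measure_biUnion_finset hdisj (fun _ _ => measurableSet_Ico)]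
    have hconst : ∀ s ∈ S, volume (Set.Ico (((s:ℝ)-1)/n) ((s:ℝ)/n))
        = ENNReal.ofReal (1/n) := by
      intro s _
      rw [Real.volume_Ico]
      congr 1
      field_simp
      ring
    rw [Finset.sum_congr rfl hconst, Finset.sum_const, hScard, nsmul_eq_mul,
      ← ENNReal.ofReal_natCast (R g n), ← ENNReal.ofReal_mul (by positivity), mul_one_div]
  have hsymD : symD A ≤ (g:ℝ)/n := by
    apply Real.sSup_le
    · rintro x ⟨C, hCA, -, ⟨c, hc⟩, rfl⟩
      have hCB : C ⊆ A ∩ {x : ℝ | 2*c - x ∈ A} := fun x hx => ⟨hCA hx, hCA ((hc x).1 hx)⟩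
      have hvc : volume C ≤ ENNReal.ofReal ((g:ℝ)/n) :=
        le_trans (measure_mono hCB) (core_bound g n hn S hSB c)
      exact ENNReal.toReal_le_of_le_ofReal (by positivity) hvc
    · positivity
  have hmemD : symD A ∈ {d : ℝ | ∃ A : Set ℝ, A ⊆ Set.Ico (0:ℝ) 1 ∧ MeasurableSet A ∧
      volume A = ENNReal.ofReal ((R g n : ℝ) / n) ∧ d = symD A} :=
    ⟨A, hAsub, hAmeas, hAvol, rfl⟩
  have hbdd : BddBelow {d : ℝ | ∃ A : Set ℝ, A ⊆ Set.Ico (0:ℝ) 1 ∧ MeasurableSet A ∧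
      volume A = ENNReal.ofReal ((R g n : ℝ) / n) ∧ d = symD A} := by
    refine ⟨0, ?_⟩
    rintro d ⟨A', hA'sub, -, -, rfl⟩
    have hbddA : BddAbove {m : ℝ | ∃ C : Set ℝ, C ⊆ A' ∧ MeasurableSet C ∧
        IsSymmetricSet C ∧ m = (volume C).toReal} := by
      refine ⟨1, ?_⟩
      rintro m ⟨C, hC, -, -, rfl⟩
      have hvc : volume C ≤ volume (Set.Ico (0:ℝ) 1) := measure_mono (hC.trans hA'sub)
      rw [Real.volume_Ico] at hvc
      exact ENNReal.toReal_le_of_le_ofReal zero_le_one (by simpa using hvc)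
    have h0 : (0:ℝ) ∈ {m : ℝ | ∃ C : Set ℝ, C ⊆ A' ∧ MeasurableSet C ∧
        IsSymmetricSet C ∧ m = (volume C).toReal} :=
      ⟨∅, Set.empty_subset _, MeasurableSet.empty, ⟨0, fun x => by simp⟩, by simp⟩
    exact le_csSup hbddA h0
  exact le_trans (csInf_le hbdd hmemD) hsymD
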